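/- Let v ∈ ℂ^n be nonzero and A ∈ ℂ^{n×n} invertible. Then ‖v A^{-1}‖² / (1 + ‖v A^{-1}‖²) ≥ ‖v‖² / (‖A‖_F² + ‖v‖²), with equality iff ‖v A^{-1}‖ · ‖A‖_F = ‖v‖. -/

import Mathlib

noncomputable def vecEnorm {n : ℕ} (x : Fin n → ℂ) : ℝ :=
  Real.sqrt (∑ i, Complex.normSq (x i))

noncomputable def fnorm {m n : ℕ} (A : Matrix (Fin m) (Fin n) ℂ) : ℝ :=
  Real.sqrt (∑ i, ∑ j, Complex.normSq (A i j))

lemma enorm_nonneg' {n : ℕ} (x : Fin n → ℂ) : 0 ≤ vecEnorm x := Real.sqrt_nonneg _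

lemma enorm_sq {n : ℕ} (x : Fin n → ℂ) : vecEnorm x ^ 2 = ∑ i, Complex.normSq (x i) :=
  Real.sq_sqrt (Finset.sum_nonneg fun i _ => Complex.normSq_nonneg _)

lemma fnorm_nonneg' {m n : ℕ} (A : Matrix (Fin m) (Fin n) ℂ) : 0 ≤ fnorm A := Real.sqrt_nonneg _

lemma fnorm_sq {m n : ℕ} (A : Matrix (Fin m) (Fin n) ℂ) :
    fnorm A ^ 2 = ∑ i, ∑ j, Complex.normSq (A i j) :=
  Real.sq_sqrt (Finset.sum_nonneg fun i _ =>
    Finset.sum_nonneg fun j _ => Complex.normSq_nonneg _)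

/-- Cauchy–Schwarz: `‖w B‖ ≤ ‖w‖ * ‖B‖_F`, squared form. -/
lemma key_sq {n : ℕ} (w : Fin n → ℂ) (B : Matrix (Fin n) (Fin n) ℂ) :
    vecEnorm (Matrix.vecMul w B) ^ 2 ≤ vecEnorm w ^ 2 * fnorm B ^ 2 := by
  rw [enorm_sq, enorm_sq, fnorm_sq, Finset.sum_comm, Finset.mul_sum]
  apply Finset.sum_le_sum
  intro j _
  have h1 : Complex.normSq (Matrix.vecMul w B j) ≤ (∑ i, ‖w i‖ * ‖B i j‖) ^ 2 := by
    rw [Complex.normSq_eq_norm_sq]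
    have habs : ‖Matrix.vecMul w B j‖ ≤ ∑ i, ‖w i‖ * ‖B i j‖ := by
      unfold Matrix.vecMul dotProduct
      calc ‖∑ i, w i * B i j‖ ≤ ∑ i, ‖w i * B i j‖ :=
            norm_sum_le _ _
        _ = ∑ i, ‖w i‖ * ‖B i j‖ := by simp [map_mul]
    have h0 : (0:ℝ) ≤ ‖Matrix.vecMul w B j‖ := norm_nonneg _
    exact pow_le_pow_left₀ h0 habs 2
  refine h1.trans ?_
  have := Finset.sum_mul_sq_le_sq_mul_sq Finset.univ (fun i => ‖w i‖)
    (fun i => ‖B i j‖)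
  refine this.trans_eq ?_
  congr 1 <;> {apply Finset.sum_congr rfl; intro i _; rw [Complex.sq_norm]
 }

theorem stmt_17 {n : ℕ} (v : Fin n → ℂ) (hv : v ≠ 0)
    (A : Matrix (Fin n) (Fin n) ℂ) (hA : IsUnit A.det) :
    vecEnorm (Matrix.vecMul v A⁻¹) ^ 2 / (1 + vecEnorm (Matrix.vecMul v A⁻¹) ^ 2) ≥
      vecEnorm v ^ 2 / (fnorm A ^ 2 + vecEnorm v ^ 2) ∧
    (vecEnorm (Matrix.vecMul v A⁻¹) ^ 2 / (1 + vecEnorm (Matrix.vecMul v A⁻¹) ^ 2) =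
        vecEnorm v ^ 2 / (fnorm A ^ 2 + vecEnorm v ^ 2) ↔
      vecEnorm (Matrix.vecMul v A⁻¹) * fnorm A = vecEnorm v) := by
  set w := Matrix.vecMul v A⁻¹ with hw
  have hvw : Matrix.vecMul w A = v := by
    rw [hw, Matrix.vecMul_vecMul, Matrix.nonsing_inv_mul A hA, Matrix.vecMul_one]
  have hkey : vecEnorm v ^ 2 ≤ vecEnorm w ^ 2 * fnorm A ^ 2 := by
    rw [← hvw]; exact key_sq w A
  set a := vecEnorm w ^ 2 with hadef
  set b := vecEnorm v ^ 2 with hbdef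
  set f := fnorm A ^ 2 with hfdef
  have ha : 0 ≤ a := sq_nonneg _
  have hf : 0 ≤ f := sq_nonneg _
  have hb : 0 < b := by
    have : vecEnorm v ≠ 0 := by
      intro h
      apply hv
      have hsum : ∑ i, Complex.normSq (v i) = 0 := by
        have := enorm_sq v
        rw [h] at this; simpa using this.symm
      funext i
      have := (Finset.sum_eq_zero_iff_of_nonneg
        (fun i _ => Complex.normSq_nonneg (v i))).1 hsum i (Finset.mem_univ i)
      exact Complex.normSq_eq_zero.1 this
    positivity
  have hd1 : (0:ℝ) < 1 + a := by linarith
  have hd2 : (0:ℝ) < f + b := by linarith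
  have hineq : b / (f + b) ≤ a / (1 + a) := by
    rw [div_le_div_iff₀ hd2 hd1]
    nlinarith [mul_comm a f]
  refine ⟨hineq, ?_⟩
  have hsq : vecEnorm w * fnorm A = vecEnorm v ↔ a * f = b := by
    constructor
    · intro h
      have h2 : (vecEnorm w * fnorm A) ^ 2 = vecEnorm v ^ 2 := by rw [h]
      rw [hadef, hbdef, hfdef, ← h2]; ring
    · intro h
      have h2 : (vecEnorm w * fnorm A) ^ 2 = vecEnorm v ^ 2 := by
        rw [hadef, hfdef] at h; rw [hbdef] at h; nlinarith
      nlinarith [enorm_nonneg' w, fnorm_nonneg' A, enorm_nonneg' v,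
        mul_nonneg (enorm_nonneg' w) (fnorm_nonneg' A)]
  rw [hsq]
  constructor
  · intro h
    have := (div_eq_div_iff hd1.ne' hd2.ne').1 h
    nlinarith
  · intro h
    rw [div_eq_div_iff hd1.ne' hd2.ne']
    nlinarith
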